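/- Let S be a Noetherian commutative ring, M a finitely generated S-module, and J an ideal of S. For an element f in S, the annihilator (0 :_M f) is contained in the J-torsion submodule H^0_J(M) = {m in M : J^n m = 0 for some n} if and only if f avoids every associated prime P of M with J not contained in P. -/

import Mathlib

open Submodule

/-- The `J`-power-torsion submodule `H^0_J(M)`. -/
def HJtors (S : Type*) [CommRing S] (M : Type*) [AddCommGroup M] [Module S M]
    (J : Ideal S) : Submodule S M where
  carrier := {m | ∃ n : ℕ, ∀ r ∈ J ^ n, r • m = 0}
  zero_mem' := ⟨0, fun r _ => smul_zero r⟩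
  add_mem' := by
    rintro a b ⟨na, ha⟩ ⟨nb, hb⟩
    refine ⟨na + nb, fun r hr => ?_⟩
    rw [smul_add, ha r (Ideal.pow_le_pow_right (Nat.le_add_right _ _) hr),
      hb r (Ideal.pow_le_pow_right (Nat.le_add_left _ _) hr), add_zero]
  smul_mem' := by
    rintro c a ⟨n, hn⟩
    exact ⟨n, fun r hr => by rw [smul_comm, hn r hr, smul_zero]⟩

/-- Uniform killing: a submodule of a Noetherian module contained in the
`J`-power-torsion submodule is killed by a single power of `J`. -/
lemma HJtors_uniform {S : Type*} [CommRing S] {M : Type*} [AddCommGroup M] [Module S M]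
    [IsNoetherian S M] (J : Ideal S) {K : Submodule S M} (hK : K ≤ HJtors S M J) :
    ∃ n : ℕ, ∀ r ∈ J ^ n, ∀ y ∈ K, r • y = 0 := by
  obtain ⟨s, hs⟩ := IsNoetherian.noetherian K
  have key : ∀ y : (s : Set M), ∃ n : ℕ, ∀ r ∈ J ^ n, r • (y : M) = 0 :=
    fun y => hK (hs ▸ Submodule.subset_span y.2)
  choose g hg using key
  refine ⟨s.attach.sup (fun y => g ⟨y.1, y.2⟩), fun r hr y hy => ?_⟩
  rw [← hs] at hy
  induction hy using Submodule.span_induction with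
  | mem z hz =>
      exact hg ⟨z, hz⟩ r (Ideal.pow_le_pow_right
        (Finset.le_sup (Finset.mem_attach s ⟨z, hz⟩)) hr)
  | zero => exact smul_zero r
  | add a b _ _ ha hb => rw [smul_add, ha, hb, add_zero]
  | smul c a _ ha => rw [smul_comm, ha, smul_zero]

/-- Let `S` be a Noetherian commutative ring, `M` a finitely generated
`S`-module, and `J` an ideal of `S`.  For an element `f` of `S`, the annihilator
`(0 :_M f)` is contained in the `J`-torsion submodule
`H^0_J(M) = {m : M | ∃ n, J^n • m = 0}` if and only if `f` avoids every associated
prime `P` of `M` with `J ⊄ P`. -/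
theorem colon_subset_torsion_iff_avoids_assPrimes
    (S : Type*) [CommRing S] [IsNoetherianRing S]
    (M : Type*) [AddCommGroup M] [Module S M] [Module.Finite S M]
    (J : Ideal S) (f : S) :
    (∀ m : M, f • m = 0 → ∃ n : ℕ, ∀ r ∈ J ^ n, r • m = 0) ↔
      (∀ P ∈ associatedPrimes S M, ¬ J ≤ P → f ∉ P) := by
  constructor
  · rintro h P hP hJP hfP
    obtain ⟨hPp, x, hx⟩ := isAssociatedPrime_iff.mp hP
    have hfx : f • x = 0 := by
      rw [hx] at hfP
      rwa [Submodule.mem_colon_singleton, Submodule.mem_bot] at hfP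
    obtain ⟨n, hn⟩ := h x hfx
    refine hJP (Ideal.IsPrime.le_of_pow_le (n := n) ?_)
    rw [hx]
    intro r hr
    rw [Submodule.mem_colon_singleton, Submodule.mem_bot]
    exact hn r hr
  · intro h m hfm
    suffices hmem : m ∈ HJtors S M J by exact hmem
    by_contra hm
    set N := HJtors S M J with hN
    have hm' : (Submodule.Quotient.mk m : M ⧸ N) ≠ 0 := by
      simpa [Submodule.Quotient.mk_eq_zero] using hm
    obtain ⟨P, hP, hle⟩ := exists_le_isAssociatedPrime_of_isNoetherianRing S
      (Submodule.Quotient.mk m : M ⧸ N) hm'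
    have hfP : f ∈ P := by
      refine hle ?_
      rw [Submodule.mem_colon_singleton, Submodule.mem_bot, ← Submodule.Quotient.mk_smul, hfm,
        Submodule.Quotient.mk_zero]
    obtain ⟨hPp, xbar, hx⟩ := isAssociatedPrime_iff.mp hP
    have hxne : xbar ≠ 0 := by
      rintro rfl
      rw [show (⊥ : Submodule S (M ⧸ N)).colon {0} = ⊤ by
        ext; simp [Submodule.mem_colon_singleton]] at hx
      exact hPp.ne_top hx
    obtain ⟨x, rfl⟩ := Submodule.Quotient.mk_surjective N xbar
    -- membership in `N` via the quotient
    have hmemN : ∀ y : M, (Submodule.Quotient.mk y : M ⧸ N) = 0 ↔ y ∈ N := fun y =>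
      Submodule.Quotient.mk_eq_zero N
    have hPsm : ∀ s : S, s ∈ P → s • x ∈ N := by
      intro s hs
      rw [← hmemN, Submodule.Quotient.mk_smul]
      rw [hx, Submodule.mem_colon_singleton, Submodule.mem_bot] at hs
      exact hs
    -- `J` is not contained in `P`
    have hJP : ¬ J ≤ P := by
      intro hJle
      have hsub : J • Submodule.span S {x} ≤ N := by
        rw [Submodule.smul_le]
        intro r hr y hy
        obtain ⟨c, rfl⟩ := Submodule.mem_span_singleton.mp hy
        rw [smul_comm]
        exact N.smul_mem c (hPsm r (hJle hr))
      obtain ⟨n, hn⟩ := HJtors_uniform J hsub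
      refine hxne ((hmemN x).mpr ⟨n + 1, fun r hr => ?_⟩)
      rw [pow_succ] at hr
      have hrann : J ^ n * J ≤ (Submodule.span S {x}).annihilator := by
        refine Ideal.mul_le.mpr fun a ha b hb => ?_
        rw [Submodule.mem_annihilator_span_singleton, mul_smul]
        exact hn a ha _ (Submodule.smul_mem_smul hb (Submodule.mem_span_singleton_self x))
      exact Submodule.mem_annihilator_span_singleton x r |>.mp (hrann hr)
    -- `P` is an associated prime of `M`
    obtain ⟨k, hk⟩ := HJtors_uniform J (inf_le_left : N ⊓ Submodule.span S {x} ≤ N)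
    have hpow : ¬ J ^ k ≤ P := fun hc => hJP (Ideal.IsPrime.le_of_pow_le hc)
    obtain ⟨t, htJ, htP⟩ := SetLike.not_le_iff_exists.mp hpow
    have hPassM : IsAssociatedPrime P M := by
      refine isAssociatedPrime_iff.mpr ⟨hPp, t • x, le_antisymm ?_ ?_⟩
      · intro s hs
        rw [Submodule.mem_colon_singleton, Submodule.mem_bot]
        have h1 : s • x ∈ N ⊓ Submodule.span S {x} :=
          ⟨hPsm s hs, Submodule.smul_mem _ s (Submodule.mem_span_singleton_self x)⟩
        calc s • t • x = t • s • x := smul_comm s t x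
          _ = 0 := hk t htJ _ h1
      · intro s hs
        rw [Submodule.mem_colon_singleton, Submodule.mem_bot, smul_smul] at hs
        have : s * t ∈ P := by
          rw [hx, Submodule.mem_colon_singleton, Submodule.mem_bot, ← Submodule.Quotient.mk_smul, hs,
            Submodule.Quotient.mk_zero]
        exact (hPp.mem_or_mem this).resolve_right htP
    exact h P hPassM hJP hfP
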